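/- arXiv:1812.05402 — 3 statements merged into one kernel-verified Lean document; each statement's English description precedes it below -/
import Mathlib

section
/- A real d×d matrix β has all eigenvalues with strictly negative real parts if and only if ‖e^{tβ}‖ → 0 as t → ∞, where ‖·‖ is the Frobenius (or any) matrix norm. -/
open Filter NormedSpace

attribute [local instance] Matrix.frobeniusNormedAddCommGroup Matrix.frobeniusNormedRing
  Matrix.frobeniusNormedAlgebra

open Matrix in
private lemma stmt2_decay (m : ℕ) {b : ℝ} (hb : b < 0) :
    Tendsto (fun t : ℝ => t ^ m * Real.exp (t * b)) atTop (nhds 0) := by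
  have h1 : Tendsto (fun x : ℝ => x ^ m * Real.exp (-x)) atTop (nhds 0) :=
    Real.tendsto_pow_mul_exp_neg_atTop_nhds_zero m
  have h2 : Tendsto (fun t : ℝ => (-b) * t) atTop atTop :=
    tendsto_id.const_mul_atTop (by linarith)
  have h3 := (h1.comp h2).const_mul ((-b) ^ m)⁻¹
  rw [mul_zero] at h3
  refine h3.congr fun t => ?_
  simp only [Function.comp_apply]
  have hbm : ((-b) ^ m) ≠ 0 := pow_ne_zero _ (by linarith)
  field_simp
  ring_nf

open Matrix in
private lemma stmt2_mulVec_exp_eq (d k : ℕ) (A : Matrix (Fin d) (Fin d) ℂ) (μ : ℂ)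
    (v : Fin d → ℂ) (hv : ((A - μ • 1) ^ k) *ᵥ v = 0) (t : ℂ) :
    exp (t • A) *ᵥ v = Complex.exp (t * μ) •
      ∑ m ∈ Finset.range k, ((t ^ m * (m.factorial : ℂ)⁻¹)) • ((A - μ • 1) ^ m *ᵥ v) := by
  set N := A - μ • (1 : Matrix (Fin d) (Fin d) ℂ) with hN
  have hsplit : t • A = (t * μ) • (1 : Matrix (Fin d) (Fin d) ℂ) + t • N := by
    rw [hN, smul_sub, mul_smul]
    abel
  have hcomm : Commute ((t * μ) • (1 : Matrix (Fin d) (Fin d) ℂ)) (t • N) :=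
    ((Commute.one_left N).smul_left _).smul_right _
  have hexp : exp (t • A) = Complex.exp (t * μ) • exp (t • N) := by
    rw [hsplit, Matrix.exp_add_of_commute _ _ hcomm]
    have h1 : (t * μ) • (1 : Matrix (Fin d) (Fin d) ℂ) =
        algebraMap ℂ (Matrix (Fin d) (Fin d) ℂ) (t * μ) := (Algebra.algebraMap_eq_smul_one _).symm
    erw [h1, ← algebraMap_exp_comm, ← Complex.exp_eq_exp_ℂ, ← Algebra.smul_def]
  let L : Matrix (Fin d) (Fin d) ℂ →ₗ[ℂ] (Fin d → ℂ) :=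
    { toFun := (· *ᵥ v)
      map_add' := fun M N => Matrix.add_mulVec M N v
      map_smul' := fun c M => Matrix.smul_mulVec c M v }
  have hLcont : Continuous L := L.continuous_of_finiteDimensional
  have hexpN : exp (t • N) *ᵥ v
      = ∑' n : ℕ, ((n.factorial : ℂ)⁻¹ • (t • N) ^ n) *ᵥ v := by
    have := ((exp_series_hasSum_exp' (𝕂 := ℂ) (t • N)).map L hLcont).tsum_eq
    simp [L] at this
    exact this.symm
  have hterm : ∀ n : ℕ, ((n.factorial : ℂ)⁻¹ • (t • N) ^ n) *ᵥ v
      = (t ^ n * (n.factorial : ℂ)⁻¹) • (N ^ n *ᵥ v) := by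
    intro n
    rw [smul_pow, smul_smul, Matrix.smul_mulVec, mul_comm]
  have hzero : ∀ n ∉ Finset.range k, ((n.factorial : ℂ)⁻¹ • (t • N) ^ n) *ᵥ v = 0 := by
    intro n hn
    rw [Finset.mem_range, not_lt] at hn
    rw [hterm n]
    have : N ^ n *ᵥ v = 0 := by
      have : N ^ n = N ^ (n - k) * N ^ k := by rw [← pow_add]; congr 1; omega
      rw [this, ← Matrix.mulVec_mulVec, hv, Matrix.mulVec_zero]
    rw [this, smul_zero]
  rw [hexp, Matrix.smul_mulVec, hexpN, tsum_eq_sum hzero]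
  congr 1
  exact Finset.sum_congr rfl fun n _ => hterm n

open Matrix in
private lemma stmt2_forward (d : ℕ) (A : Matrix (Fin d) (Fin d) ℂ)
    (h : ∀ z ∈ spectrum ℂ A, z.re < 0) (v : Fin d → ℂ) :
    Tendsto (fun t : ℝ => exp ((t:ℂ) • A) *ᵥ v) atTop (nhds 0) := by
  set f : Module.End ℂ (Fin d → ℂ) := Matrix.toLinAlgEquiv' A with hf
  let S : Submodule ℂ (Fin d → ℂ) :=
    { carrier := {w | Tendsto (fun t : ℝ => exp ((t:ℂ) • A) *ᵥ w) atTop (nhds 0)}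
      add_mem' := by
        intro a b ha hb
        have := ha.add hb
        simpa [Matrix.mulVec_add] using this
      zero_mem' := by simpa [Matrix.mulVec_zero] using tendsto_const_nhds
      smul_mem' := by
        intro c a ha
        have := ha.const_smul c
        simpa [Matrix.mulVec_smul] using this }
  suffices hS : ⊤ ≤ S by exact hS (Submodule.mem_top)
  rw [← Module.End.iSup_maxGenEigenspace_eq_top f]
  refine iSup_le fun μ => ?_
  intro v hv
  by_cases hvz : v = 0
  · simpa [hvz, Matrix.mulVec_zero, S] using tendsto_const_nhds
  have hμspec : μ ∈ spectrum ℂ A := by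
    have hnontriv : Nontrivial (Fin d → ℂ) := ⟨v, 0, hvz⟩
    have huni : f.HasUnifEigenvalue μ ⊤ := by
      intro hbot
      have : v ∈ (⊥ : Submodule ℂ (Fin d → ℂ)) := hbot ▸ hv
      exact hvz (by simpa using this)
    have : f.HasEigenvalue μ := huni.lt (by norm_num)
    have := this.mem_spectrum
    rwa [hf, AlgEquiv.spectrum_eq] at this
  have hre : μ.re < 0 := h μ hμspec
  obtain ⟨k, hk⟩ := (Module.End.mem_maxGenEigenspace f μ v).mp hv
  have hkv : ((A - μ • 1) ^ k) *ᵥ v = 0 := by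
    have : Matrix.toLinAlgEquiv' ((A - μ • (1 : Matrix (Fin d) (Fin d) ℂ)) ^ k) v = 0 := by
      rw [map_pow, map_sub, _root_.map_smul, _root_.map_one]
      exact hk
    rwa [Matrix.toLinAlgEquiv'_apply] at this
  show Tendsto (fun t : ℝ => exp ((t:ℂ) • A) *ᵥ v) atTop (nhds 0)
  set w : ℕ → (Fin d → ℂ) := fun m => (A - μ • 1) ^ m *ᵥ v with hw
  have hbound : ∀ᶠ t : ℝ in atTop, ‖exp ((t:ℂ) • A) *ᵥ v‖
      ≤ ∑ m ∈ Finset.range k, ((m.factorial : ℝ)⁻¹ * ‖w m‖) * (t ^ m * Real.exp (t * μ.re)) := by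
    filter_upwards [eventually_ge_atTop (0:ℝ)] with t ht
    rw [stmt2_mulVec_exp_eq d k A μ v hkv (t:ℂ)]
    rw [norm_smul]
    have h1 : ‖Complex.exp ((t:ℂ) * μ)‖ = Real.exp (t * μ.re) := by
      rw [Complex.norm_exp]
      congr 1
      simp [Complex.mul_re]
    rw [h1]
    calc Real.exp (t * μ.re) * ‖∑ m ∈ Finset.range k, ((t:ℂ) ^ m * (m.factorial : ℂ)⁻¹) • w m‖
        ≤ Real.exp (t * μ.re) * ∑ m ∈ Finset.range k, ‖((t:ℂ) ^ m * (m.factorial : ℂ)⁻¹) • w m‖ := by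
          gcongr
          exact norm_sum_le _ _
      _ = ∑ m ∈ Finset.range k, ((m.factorial : ℝ)⁻¹ * ‖w m‖) * (t ^ m * Real.exp (t * μ.re)) := by
          rw [Finset.mul_sum]
          refine Finset.sum_congr rfl fun m _ => ?_
          rw [norm_smul]
          have : ‖((t:ℂ) ^ m * (m.factorial : ℂ)⁻¹)‖ = t ^ m * (m.factorial : ℝ)⁻¹ := by
            rw [norm_mul, norm_pow, norm_inv]
            simp [Complex.norm_real, abs_of_nonneg ht, Complex.norm_natCast]
          rw [this]
          ring
  have hg : Tendsto (fun t : ℝ => ∑ m ∈ Finset.range k,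
      ((m.factorial : ℝ)⁻¹ * ‖w m‖) * (t ^ m * Real.exp (t * μ.re))) atTop (nhds 0) := by
    have : Tendsto (fun t : ℝ => ∑ m ∈ Finset.range k,
        ((m.factorial : ℝ)⁻¹ * ‖w m‖) * (t ^ m * Real.exp (t * μ.re))) atTop
        (nhds (∑ m ∈ Finset.range k, ((m.factorial : ℝ)⁻¹ * ‖w m‖) * 0)) := by
      refine tendsto_finset_sum _ fun m _ => ?_
      exact (stmt2_decay m hre).const_mul _
    simpa using this
  exact squeeze_zero_norm' hbound hg

/-- A real matrix `β` has all eigenvalues with strictly negative real parts if and only if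
`‖e^{tβ}‖ → 0` as `t → ∞` (Frobenius norm). -/
theorem stmt2 (d : ℕ) (β : Matrix (Fin d) (Fin d) ℝ) :
    (∀ z ∈ spectrum ℂ (β.map (algebraMap ℝ ℂ)), z.re < 0) ↔
      Tendsto (fun t : ℝ => ‖exp (t • β)‖) atTop (nhds 0) := by
  set A : Matrix (Fin d) (Fin d) ℂ := β.map (algebraMap ℝ ℂ) with hA
  have hnorm : ∀ t : ℝ, ‖exp (t • β)‖ = ‖exp ((t:ℂ) • A)‖ := by
    intro t
    have hcont : Continuous ((algebraMap ℝ ℂ).mapMatrix :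
        Matrix (Fin d) (Fin d) ℝ →+* Matrix (Fin d) (Fin d) ℂ) :=
      Continuous.matrix_map continuous_id Complex.continuous_ofReal
    have h1 : (exp (t • β)).map (algebraMap ℝ ℂ) = exp ((t:ℂ) • A) := by
      have := map_exp ((algebraMap ℝ ℂ).mapMatrix :
        Matrix (Fin d) (Fin d) ℝ →+* Matrix (Fin d) (Fin d) ℂ) hcont (t • β)
      convert this using 2
      · rfl
      · rfl
      · rfl
      ext i j
      simp [hA, Matrix.map_apply, RingHom.mapMatrix_apply]
    rw [← h1]
    exact (Matrix.frobenius_norm_map_eq _ _ (fun a => Complex.norm_real a)).symm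
  constructor
  · intro h
    have hentry : ∀ i j : Fin d,
        Tendsto (fun t : ℝ => exp ((t:ℂ) • A) i j) atTop (nhds 0) := by
      intro i j
      have hvec := stmt2_forward d A h (Pi.single j 1)
      have := ((continuous_apply i).tendsto (0 : Fin d → ℂ)).comp hvec
      refine this.congr fun t => ?_
      simp [Matrix.mulVec_single]
    have hsum : Tendsto (fun t : ℝ =>
        ∑ i, ∑ j, ‖exp ((t:ℂ) • A) i j‖ ^ (2:ℝ)) atTop (nhds 0) := by
      have : Tendsto (fun t : ℝ => ∑ i, ∑ j, ‖exp ((t:ℂ) • A) i j‖ ^ (2:ℝ)) atTop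
          (nhds (∑ _i : Fin d, ∑ _j : Fin d, (0:ℝ))) := by
        refine tendsto_finset_sum _ fun i _ => tendsto_finset_sum _ fun j _ => ?_
        have h0 : Tendsto (fun t : ℝ => ‖exp ((t:ℂ) • A) i j‖) atTop (nhds 0) := by
          simpa using (hentry i j).norm
        have h2 : Tendsto (fun x : ℝ => x ^ (2:ℝ)) (nhds 0) (nhds ((0:ℝ) ^ (2:ℝ))) :=
          (Real.continuousAt_rpow_const 0 2 (Or.inr two_pos.le)).tendsto
        simpa [Real.zero_rpow, Function.comp_def] using h2.comp h0
      simpa using this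
    have hroot : Tendsto (fun x : ℝ => x ^ (1/2 : ℝ)) (nhds 0) (nhds 0) := by
      have := (Real.continuousAt_rpow_const 0 (1/2)
        (Or.inr (by norm_num : (0:ℝ) ≤ 1/2))).tendsto
      simpa [Real.zero_rpow] using this
    have := hroot.comp hsum
    refine this.congr fun t => ?_
    simp only [Function.comp_apply]
    rw [← Matrix.frobenius_norm_def]
    exact (hnorm t).symm
  · intro h z hz
    by_contra hre
    push_neg at hre
    have h' : Tendsto (fun t : ℝ => ‖exp ((t:ℂ) • A)‖) atTop (nhds 0) :=
      h.congr fun t => hnorm t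
    have key : ∀ t : ℝ, 0 < t →
        (1:ℝ) ≤ ‖exp ((t:ℂ) • A)‖ * ‖(1 : Matrix (Fin d) (Fin d) ℂ)‖ := by
      intro t ht
      have ht' : ((t:ℂ)) ≠ 0 := by exact_mod_cast ht.ne'
      have hmem : (t:ℂ) * z ∈ spectrum ℂ ((t:ℂ) • A) := by
        rw [show ((t:ℂ) • A) = (Units.mk0 (t:ℂ) ht') • A from rfl,
          spectrum.unit_smul_eq_smul]
        exact ⟨z, hz, rfl⟩
      have hexp := spectrum.exp_mem_exp ((t:ℂ) • A) hmem
      have hle := spectrum.norm_le_norm_mul_of_mem hexp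
      refine le_trans ?_ hle
      rw [← Complex.exp_eq_exp_ℂ, Complex.norm_exp]
      have : 0 ≤ ((t:ℂ) * z).re := by
        simp only [Complex.mul_re, Complex.ofReal_re, Complex.ofReal_im, zero_mul, sub_zero]
        positivity
      simpa using Real.exp_le_exp.2 this |>.trans_eq' Real.exp_zero
    have h2 : Tendsto (fun t : ℝ => ‖exp ((t:ℂ) • A)‖ * ‖(1 : Matrix (Fin d) (Fin d) ℂ)‖)
        atTop (nhds 0) := by simpa using h'.mul_const _
    have h3 := h2.eventually (eventually_lt_nhds one_pos)
    obtain ⟨t, ht1, ht2⟩ := (h3.and (eventually_gt_atTop 0)).exists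
    exact absurd (key t ht2) (not_le.2 ht1)
end

section
/- Let c₁, c₂ > 0 and let ψ : [0,∞) → ℂ^d satisfy ‖ψ(s)‖ ≤ c₁ e^{−c₂ s} for all s ≥ 0 and Re⟨ξ, ψ(s)⟩ ≤ 0 for a fixed ξ ∈ ℝ^d with ‖ξ‖ > 1. Then ∫₀^∞ |e^{⟨ξ, ψ(s)⟩} − 1| ds ≤ c₁/c₂ + (2/c₂) log‖ξ‖. -/
open MeasureTheory

noncomputable instance (d : ℕ) : MeasurableSpace (EuclideanSpace ℂ (Fin d)) :=
  MeasurableSpace.comap WithLp.ofLp MeasurableSpace.pi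

lemma aux_abs_exp_sub_one (z : ℂ) (hz : z.re ≤ 0) :
    ‖Complex.exp z - 1‖ ≤ ‖z‖ := by
  have key : Complex.exp z - 1 = ∫ t in (0:ℝ)..1, z * Complex.exp ((t:ℂ) * z) := by
    have h : ∀ t ∈ Set.uIcc (0:ℝ) 1,
        HasDerivAt (fun t : ℝ => Complex.exp ((t:ℂ) * z))
          (z * Complex.exp ((t:ℂ) * z)) t := by
      intro t _
      have h1 : HasDerivAt (fun t : ℝ => (t:ℂ) * z) z t := by
        simpa using (Complex.ofRealCLM.hasDerivAt (x := t)).mul_const z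
      simpa [mul_comm] using h1.cexp
    have hc : IntervalIntegrable (fun t : ℝ => z * Complex.exp ((t:ℂ) * z))
        MeasureTheory.volume 0 1 := by
      apply Continuous.intervalIntegrable
      fun_prop
    rw [intervalIntegral.integral_eq_sub_of_hasDerivAt h hc]
    simp
  rw [key]
  have hbound : ∀ t ∈ Set.uIoc (0:ℝ) 1,
      ‖z * Complex.exp ((t:ℂ) * z)‖ ≤ ‖z‖ := by
    intro t ht
    rw [Set.uIoc_of_le (by norm_num : (0:ℝ) ≤ 1)] at ht
    have ht0 : 0 ≤ t := le_of_lt ht.1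
    have : ‖Complex.exp ((t:ℂ) * z)‖ ≤ 1 := by
      rw [Complex.norm_exp]
      have : ((t:ℂ) * z).re = t * z.re := by simp
      rw [this]
      exact Real.exp_le_one_iff.2 (mul_nonpos_of_nonneg_of_nonpos ht0 hz)
    calc ‖z * Complex.exp ((t:ℂ) * z)‖ = ‖z‖ * ‖Complex.exp ((t:ℂ) * z)‖ := by
          rw [norm_mul]
      _ ≤ ‖z‖ * 1 := by
          exact mul_le_mul_of_nonneg_left this (norm_nonneg _)
      _ = ‖z‖ := by simp
  have := intervalIntegral.norm_integral_le_of_norm_le_const hbound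
  simpa using this

lemma aux_integral_exp_neg (a : ℝ) {b : ℝ} (hb : 0 < b) :
    ∫ x in Set.Ioi a, Real.exp (-b * x) = Real.exp (-b * a) / b := by
  have hderiv : ∀ x ∈ Set.Ici a,
      HasDerivAt (fun x => -Real.exp (-b * x) / b) (Real.exp (-b * x)) x := by
    intro x _
    have := (((hasDerivAt_id x).const_mul (-b)).exp).neg.div_const b
    simpa [hb.ne', mul_comm, mul_div_assoc] using this
  have htend : Filter.Tendsto (fun x => -Real.exp (-b * x) / b) Filter.atTop (nhds 0) := by
    have : Filter.Tendsto (fun x => -Real.exp (-b * x) / b) Filter.atTop (nhds (-0 / b)) := by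
      refine Filter.Tendsto.div_const (Filter.Tendsto.neg ?_) _
      exact Real.tendsto_exp_atBot.comp (Filter.tendsto_id.const_mul_atTop_of_neg (by linarith))
    simpa using this
  rw [MeasureTheory.integral_Ioi_of_hasDerivAt_of_tendsto'
    hderiv (exp_neg_integrableOn_Ioi a hb) htend]
  ring

/-- If `‖ψ(s)‖ ≤ c₁ e^{-c₂ s}` and `Re⟨ξ, ψ(s)⟩ ≤ 0` with `‖ξ‖ > 1`, then
`∫₀^∞ |e^{⟨ξ,ψ(s)⟩} - 1| ds ≤ c₁/c₂ + (2/c₂) log ‖ξ‖`. -/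
theorem stmt5 (d : ℕ) (c₁ c₂ : ℝ) (hc₁ : 0 < c₁) (hc₂ : 0 < c₂)
    (ψ : ℝ → EuclideanSpace ℂ (Fin d)) (hψ : Measurable ψ)
    (ξ : EuclideanSpace ℝ (Fin d)) (hξ : 1 < ‖ξ‖)
    (hdecay : ∀ s : ℝ, 0 ≤ s → ‖ψ s‖ ≤ c₁ * Real.exp (-c₂ * s))
    (hre : ∀ s : ℝ, 0 ≤ s → (∑ i, (ξ i : ℂ) * ψ s i).re ≤ 0) :
    (∫ s in Set.Ioi (0:ℝ),
        ‖Complex.exp (∑ i, (ξ i : ℂ) * ψ s i) - 1‖) ≤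
      c₁ / c₂ + (2 / c₂) * Real.log ‖ξ‖ := by
  set Z : ℝ → ℂ := fun s => ∑ i, (ξ i : ℂ) * ψ s i with hZ
  set F : ℝ → ℝ := fun s => ‖Complex.exp (Z s) - 1‖ with hF
  -- measurability
  have hZm : Measurable Z := by
    apply Finset.measurable_sum
    intro i _
    exact measurable_const.mul ((measurable_pi_apply i).comp ((comap_measurable WithLp.ofLp).comp hψ))
  have hFm : Measurable F := by
    exact (Complex.measurable_exp.comp hZm).sub measurable_const |>.norm
  -- Cauchy-Schwarz type bound
  have hZnorm : ∀ s : ℝ, 0 ≤ s → ‖Z s‖ ≤ ‖ξ‖ * (c₁ * Real.exp (-c₂ * s)) := by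
    intro s hs
    set x : EuclideanSpace ℂ (Fin d) := WithLp.toLp 2 (fun i => (ξ i : ℂ)) with hx
    have hinner : Z s = @inner ℂ _ _ x (ψ s) := by
      rw [PiLp.inner_apply]
      apply Finset.sum_congr rfl
      intro i _
      simp [hx, RCLike.inner_apply, Complex.conj_ofReal, mul_comm]
    have hxnorm : ‖x‖ = ‖ξ‖ := by
      rw [EuclideanSpace.norm_eq, EuclideanSpace.norm_eq]
      congr 1
      apply Finset.sum_congr rfl
      intro i _
      simp [hx]
    calc ‖Z s‖ = ‖@inner ℂ _ _ x (ψ s)‖ := by rw [hinner]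
      _ ≤ ‖x‖ * ‖ψ s‖ := norm_inner_le_norm x (ψ s)
      _ ≤ ‖ξ‖ * (c₁ * Real.exp (-c₂ * s)) := by
          rw [hxnorm]
          exact mul_le_mul_of_nonneg_left (hdecay s hs) (by positivity)
  -- pointwise bounds
  have hF2 : ∀ s : ℝ, 0 ≤ s → F s ≤ 2 := by
    intro s hs
    have h1 : ‖Complex.exp (Z s)‖ ≤ 1 := by
      rw [Complex.norm_exp]
      exact Real.exp_le_one_iff.2 (hre s hs)
    calc F s ≤ ‖Complex.exp (Z s)‖ + ‖(1:ℂ)‖ := by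
          simpa [F] using norm_sub_le (Complex.exp (Z s)) 1
      _ ≤ 2 := by rw [norm_one]; linarith
  have hFz : ∀ s : ℝ, 0 ≤ s → F s ≤ ‖ξ‖ * (c₁ * Real.exp (-c₂ * s)) := by
    intro s hs
    exact le_trans (aux_abs_exp_sub_one (Z s) (hre s hs)) (hZnorm s hs)
  -- integrability of F on Ioi 0
  have hg : IntegrableOn (fun s => ‖ξ‖ * c₁ * Real.exp (-c₂ * s)) (Set.Ioi (0:ℝ)) :=
    (exp_neg_integrableOn_Ioi 0 hc₂).const_mul (‖ξ‖ * c₁)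
  have hFint : IntegrableOn F (Set.Ioi (0:ℝ)) := by
    apply Integrable.mono' hg hFm.aestronglyMeasurable.restrict
    filter_upwards [ae_restrict_mem measurableSet_Ioi] with s hs
    rw [Real.norm_of_nonneg (show (0:ℝ) ≤ F s from norm_nonneg _)]
    calc F s ≤ ‖ξ‖ * (c₁ * Real.exp (-c₂ * s)) := hFz s (le_of_lt hs)
      _ = ‖ξ‖ * c₁ * Real.exp (-c₂ * s) := by ring
  -- split point
  set s₀ : ℝ := Real.log ‖ξ‖ / c₂ with hs₀
  have hlog : 0 < Real.log ‖ξ‖ := Real.log_pos hξ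
  have hs₀pos : 0 < s₀ := by positivity
  have hsplit : (∫ s in Set.Ioi (0:ℝ), F s) =
      (∫ s in Set.Ioc (0:ℝ) s₀, F s) + ∫ s in Set.Ioi s₀, F s := by
    rw [← MeasureTheory.setIntegral_union (Set.Ioc_disjoint_Ioi le_rfl)
      measurableSet_Ioi (hFint.mono_set Set.Ioc_subset_Ioi_self)
      (hFint.mono_set (Set.Ioi_subset_Ioi hs₀pos.le)),
      Set.Ioc_union_Ioi_eq_Ioi hs₀pos.le]
  rw [hsplit]
  -- first piece
  have hpiece1 : (∫ s in Set.Ioc (0:ℝ) s₀, F s) ≤ (2 / c₂) * Real.log ‖ξ‖ := by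
    have h1 : (∫ s in Set.Ioc (0:ℝ) s₀, F s) ≤ ∫ _ in Set.Ioc (0:ℝ) s₀, (2:ℝ) := by
      apply MeasureTheory.setIntegral_mono_on
        (hFint.mono_set Set.Ioc_subset_Ioi_self)
        (integrableOn_const (by simp [hs₀pos]) (by simp))
        measurableSet_Ioc
      intro s hs
      exact hF2 s hs.1.le
    have h2 : (∫ _ in Set.Ioc (0:ℝ) s₀, (2:ℝ)) = 2 * s₀ := by
      simp [Real.volume_Ioc, hs₀pos.le, ENNReal.toReal_ofReal, mul_comm]
    rw [h2] at h1
    calc (∫ s in Set.Ioc (0:ℝ) s₀, F s) ≤ 2 * s₀ := h1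
      _ = (2 / c₂) * Real.log ‖ξ‖ := by rw [hs₀]; field_simp
  -- second piece
  have hpiece2 : (∫ s in Set.Ioi s₀, F s) ≤ c₁ / c₂ := by
    have h1 : (∫ s in Set.Ioi s₀, F s) ≤ ∫ s in Set.Ioi s₀, ‖ξ‖ * c₁ * Real.exp (-c₂ * s) := by
      apply MeasureTheory.setIntegral_mono_on
        (hFint.mono_set (Set.Ioi_subset_Ioi hs₀pos.le))
        (hg.mono_set (Set.Ioi_subset_Ioi hs₀pos.le))
        measurableSet_Ioi
      intro s hs
      have : F s ≤ ‖ξ‖ * (c₁ * Real.exp (-c₂ * s)) := hFz s (hs₀pos.trans hs).le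
      linarith [this]
    have h2 : (∫ s in Set.Ioi s₀, ‖ξ‖ * c₁ * Real.exp (-c₂ * s)) = c₁ / c₂ := by
      rw [MeasureTheory.integral_const_mul, aux_integral_exp_neg s₀ hc₂]
      have hexp : Real.exp (-c₂ * s₀) = 1 / ‖ξ‖ := by
        rw [hs₀]
        rw [show -c₂ * (Real.log ‖ξ‖ / c₂) = -Real.log ‖ξ‖ by field_simp]
        rw [Real.exp_neg, Real.exp_log (by linarith)]
        ring
      rw [hexp]
      have hξ0 : (0:ℝ) < ‖ξ‖ := by linarith
      field_simp
    rw [h2] at h1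
    exact h1
  linarith [hpiece1, hpiece2]
end

section
/- Let z ∈ ℂ^d with Re zᵢ ≤ 0 for i = 1,…,m (the first m coordinates) and Re zᵢ = 0 for i = m+1,…,d, and let ξ ∈ ℝ^m_{≥0} × ℝ^n with ‖ξ‖ ≤ 1, where d = m+n. Writing z = (z^I, z^J) and ξ = (ξ_I, ξ_J), if ‖z‖ ≤ C then |e^{⟨ξ,z⟩} − 1 − ⟨z^J, ξ_J⟩| ≤ (C + C²)(2‖ξ_I‖ + ‖ξ_J‖²). -/
open Complex in
lemma exp_deriv_aux (w : ℂ) (t : ℝ) :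
    HasDerivAt (fun s : ℝ => Complex.exp ((s : ℂ) * w)) (Complex.exp ((t : ℂ) * w) * w) t := by
  have h1 : HasDerivAt (fun s : ℝ => (s : ℂ) * w) w t := by
    simpa using (Complex.ofRealCLM.hasDerivAt (x := t)).mul_const w
  exact h1.cexp

open Complex in
lemma abs_exp_sub_one_le_of_re_nonpos (w : ℂ) (hw : w.re ≤ 0) :
    ‖Complex.exp w - 1‖ ≤ ‖w‖ := by
  have key := Convex.norm_image_sub_le_of_norm_hasDerivWithin_le
    (f := fun s : ℝ => Complex.exp ((s : ℂ) * w))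
    (f' := fun s : ℝ => Complex.exp ((s : ℂ) * w) * w)
    (s := Set.Icc (0:ℝ) 1) (C := ‖w‖)
    (fun x _ => (exp_deriv_aux w x).hasDerivWithinAt)
    (fun x hx => by
      have hre : ((x : ℂ) * w).re ≤ 0 := by
        simp only [Complex.mul_re, Complex.ofReal_re, Complex.ofReal_im, zero_mul, sub_zero]
        exact mul_nonpos_of_nonneg_of_nonpos hx.1 hw
      have : ‖Complex.exp ((x : ℂ) * w)‖ ≤ 1 := by
        rw [Complex.norm_exp]; exact Real.exp_le_one_iff.mpr hre
      calc ‖Complex.exp ((x : ℂ) * w) * w‖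
          = ‖Complex.exp ((x : ℂ) * w)‖ * ‖w‖ := by
            simp [norm_mul]
        _ ≤ 1 * ‖w‖ := by
            exact mul_le_mul_of_nonneg_right this (norm_nonneg w)
        _ = ‖w‖ := one_mul _)
    (convex_Icc 0 1) (Set.left_mem_Icc.mpr zero_le_one) (Set.right_mem_Icc.mpr zero_le_one)
  simpa using key

open Complex in
lemma abs_exp_sub_one_sub_le_of_re_nonpos (w : ℂ) (hw : w.re ≤ 0) :
    ‖Complex.exp w - 1 - w‖ ≤ (‖w‖) ^ 2 := by
  have key := Convex.norm_image_sub_le_of_norm_hasDerivWithin_le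
    (f := fun s : ℝ => Complex.exp ((s : ℂ) * w) - (s : ℂ) * w)
    (f' := fun s : ℝ => Complex.exp ((s : ℂ) * w) * w - w)
    (s := Set.Icc (0:ℝ) 1) (C := (‖w‖) ^ 2)
    (fun x _ => by
      have h1 : HasDerivAt (fun s : ℝ => (s : ℂ) * w) w x := by
        simpa using (Complex.ofRealCLM.hasDerivAt (x := x)).mul_const w
      exact ((exp_deriv_aux w x).sub h1).hasDerivWithinAt)
    (fun x hx => by
      have hre : ((x : ℂ) * w).re ≤ 0 := by
        simp only [Complex.mul_re, Complex.ofReal_re, Complex.ofReal_im, zero_mul, sub_zero]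
        exact mul_nonpos_of_nonneg_of_nonpos hx.1 hw
      have h1 : ‖Complex.exp ((x : ℂ) * w) - 1‖ ≤ ‖(x : ℂ) * w‖ :=
        abs_exp_sub_one_le_of_re_nonpos _ hre
      have h2 : ‖(x : ℂ) * w‖ ≤ ‖w‖ := by
        rw [norm_mul, Complex.norm_real, Real.norm_eq_abs]
        have hxabs : |x| ≤ 1 := abs_le.mpr ⟨by linarith [hx.1], hx.2⟩
        nlinarith [norm_nonneg w, abs_nonneg x]
      calc ‖Complex.exp ((x : ℂ) * w) * w - w‖
          = ‖(Complex.exp ((x : ℂ) * w) - 1) * w‖ := by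
            congr 1; ring
        _ = ‖Complex.exp ((x : ℂ) * w) - 1‖ * ‖w‖ := norm_mul _ _
        _ ≤ ‖w‖ * ‖w‖ := by
            exact mul_le_mul_of_nonneg_right (h1.trans h2) (norm_nonneg w)
        _ = (‖w‖) ^ 2 := (sq (‖w‖)).symm)
    (convex_Icc 0 1) (Set.left_mem_Icc.mpr zero_le_one) (Set.right_mem_Icc.mpr zero_le_one)
  have : Complex.exp w - 1 - w = Complex.exp w - w - 1 := by ring
  rw [this]
  simpa using key

open Complex in
lemma cs_aux {k : ℕ} (ξ : EuclideanSpace ℝ (Fin k)) (z : EuclideanSpace ℂ (Fin k)) :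
    ‖∑ i, (ξ i : ℂ) * z i‖ ≤ ‖ξ‖ * ‖z‖ := by
  set v : EuclideanSpace ℂ (Fin k) := WithLp.toLp 2 (fun i => (ξ i : ℂ)) with hv
  have hinner : (inner ℂ v z : ℂ) = ∑ i, (ξ i : ℂ) * z i := by
    rw [PiLp.inner_apply]
    congr 1; ext i
    simp [hv, RCLike.inner_apply, Complex.conj_ofReal, mul_comm]
  have hnorm : ‖v‖ = ‖ξ‖ := by
    rw [EuclideanSpace.norm_eq, EuclideanSpace.norm_eq]
    congr 1; congr 1; ext i; simp [hv]
  calc ‖∑ i, (ξ i : ℂ) * z i‖ = ‖(inner ℂ v z : ℂ)‖ := by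
        rw [hinner]
    _ ≤ ‖v‖ * ‖z‖ := norm_inner_le_norm v z
    _ = ‖ξ‖ * ‖z‖ := by rw [hnorm]

/-- Small-jump estimate: for `z = (zI, zJ)` with `Re zI ≤ 0`, `Re zJ = 0`, `‖z‖ ≤ C` and
`ξ = (ξI, ξJ) ∈ ℝ^m_{≥0} × ℝ^n` with `‖ξ‖ ≤ 1`, one has
`|e^{⟨ξ,z⟩} - 1 - ⟨zJ, ξJ⟩| ≤ (C + C²)(2‖ξI‖ + ‖ξJ‖²)`. -/
theorem stmt7 (m n : ℕ) (C : ℝ)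
    (zI : EuclideanSpace ℂ (Fin m)) (zJ : EuclideanSpace ℂ (Fin n))
    (ξI : EuclideanSpace ℝ (Fin m)) (ξJ : EuclideanSpace ℝ (Fin n))
    (hzI : ∀ i, (zI i).re ≤ 0) (hzJ : ∀ j, (zJ j).re = 0)
    (hξI : ∀ i, 0 ≤ ξI i)
    (hξ : Real.sqrt (‖ξI‖ ^ 2 + ‖ξJ‖ ^ 2) ≤ 1)
    (hz : Real.sqrt (‖zI‖ ^ 2 + ‖zJ‖ ^ 2) ≤ C) :
    ‖Complex.exp ((∑ i, (ξI i : ℂ) * zI i) + ∑ j, (ξJ j : ℂ) * zJ j) - 1 -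
        ∑ j, (ξJ j : ℂ) * zJ j‖ ≤
      (C + C ^ 2) * (2 * ‖ξI‖ + ‖ξJ‖ ^ 2) := by
  set a : ℂ := ∑ i, (ξI i : ℂ) * zI i with ha
  set b : ℂ := ∑ j, (ξJ j : ℂ) * zJ j with hb
  have hC : 0 ≤ C := le_trans (Real.sqrt_nonneg _) hz
  -- norms bounded
  have hzIC : ‖zI‖ ≤ C := by
    have h := Real.sqrt_le_sqrt (le_add_of_nonneg_right (by positivity) : ‖zI‖ ^ 2 ≤ ‖zI‖ ^ 2 + ‖zJ‖ ^ 2)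
    rw [Real.sqrt_sq (norm_nonneg _)] at h
    exact h.trans hz
  have hzJC : ‖zJ‖ ≤ C := by
    have h := Real.sqrt_le_sqrt (le_add_of_nonneg_left (by positivity) : ‖zJ‖ ^ 2 ≤ ‖zI‖ ^ 2 + ‖zJ‖ ^ 2)
    rw [Real.sqrt_sq (norm_nonneg _)] at h
    exact h.trans hz
  have hξJ1 : ‖ξJ‖ ≤ 1 := by
    have h := Real.sqrt_le_sqrt (le_add_of_nonneg_left (by positivity) : ‖ξJ‖ ^ 2 ≤ ‖ξI‖ ^ 2 + ‖ξJ‖ ^ 2)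
    rw [Real.sqrt_sq (norm_nonneg _)] at h
    exact h.trans hξ
  -- real parts
  have hare : a.re ≤ 0 := by
    rw [ha, Complex.re_sum]
    refine Finset.sum_nonpos fun i _ => ?_
    simp only [Complex.mul_re, Complex.ofReal_re, Complex.ofReal_im, zero_mul, sub_zero]
    exact mul_nonpos_of_nonneg_of_nonpos (hξI i) (hzI i)
  have hbre : b.re = 0 := by
    rw [hb, Complex.re_sum]
    refine Finset.sum_eq_zero fun j _ => ?_
    simp [Complex.mul_re, hzJ j]
  -- Cauchy–Schwarz bounds
  have haC : ‖a‖ ≤ ‖ξI‖ * C :=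
    (cs_aux ξI zI).trans (mul_le_mul_of_nonneg_left hzIC (norm_nonneg _))
  have hbC : ‖b‖ ≤ ‖ξJ‖ * C :=
    (cs_aux ξJ zJ).trans (mul_le_mul_of_nonneg_left hzJC (norm_nonneg _))
  -- decomposition
  have hdecomp : Complex.exp (a + b) - 1 - b
      = Complex.exp b * (Complex.exp a - 1) + (Complex.exp b - 1 - b) := by
    rw [Complex.exp_add]; ring
  have hexpb : ‖Complex.exp b‖ = 1 := by
    rw [Complex.norm_exp, hbre, Real.exp_zero]
  have h1 : ‖Complex.exp b * (Complex.exp a - 1)‖ ≤ ‖ξI‖ * C := by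
    rw [norm_mul, hexpb, one_mul]
    exact (abs_exp_sub_one_le_of_re_nonpos a hare).trans haC
  have h2 : ‖Complex.exp b - 1 - b‖ ≤ (‖ξJ‖ * C) ^ 2 := by
    refine (abs_exp_sub_one_sub_le_of_re_nonpos b (le_of_eq hbre)).trans ?_
    exact pow_le_pow_left₀ (norm_nonneg b) hbC 2
  calc ‖Complex.exp (a + b) - 1 - b‖
      ≤ ‖Complex.exp b * (Complex.exp a - 1)‖ +
          ‖Complex.exp b - 1 - b‖ := by
        rw [hdecomp]; exact norm_add_le _ _
    _ ≤ ‖ξI‖ * C + (‖ξJ‖ * C) ^ 2 := add_le_add h1 h2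
    _ ≤ (C + C ^ 2) * (2 * ‖ξI‖ + ‖ξJ‖ ^ 2) := by
        nlinarith [norm_nonneg ξI, norm_nonneg ξJ, sq_nonneg ‖ξJ‖, sq_nonneg C,
          mul_nonneg (norm_nonneg ξI) hC, mul_nonneg (sq_nonneg ‖ξJ‖) (sq_nonneg C)]
end
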